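/- arXiv:1603.02837 — 3 statements merged into one kernel-verified Lean document; each statement's English description precedes it below -/
import Mathlib

section
/- For a(t) = a₀ exp(a₁ t^(-α)) with a₁ < 0 (Grand Bang), ρ(t) a(t)³ = 3a₁²α² a₀³ t^(-2(α+1)) e^(3a₁ t^(-α)) → 0 as t → 0⁺, while for a₁ > 0 (Grand Rip), ρ(t) a(t)³ → +∞ as t → 0⁺. -/
open Real Filter Topology

theorem grand_aux (a₀ a₁ α : ℝ) (ha₀ : 0 < a₀) (hα : 0 < α) :
    ∀ᶠ t in nhdsWithin (0:ℝ) (Set.Ioi 0),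
      3 * a₁ ^ 2 * α ^ 2 * t ^ (-(2 * (α + 1))) * (a₀ * Real.exp (a₁ * t ^ (-α))) ^ 3
      = (fun u : ℝ => 3 * a₁ ^ 2 * α ^ 2 * a₀ ^ 3 * (u ^ (2 * (α + 1) / α) * Real.exp (3 * a₁ * u))) (t ^ (-α)) := by
  filter_upwards [self_mem_nhdsWithin] with t (ht : 0 < t)
  have h1 : (t ^ (-α)) ^ (2 * (α + 1) / α) = t ^ (-(2 * (α + 1))) := by
    rw [← Real.rpow_mul ht.le]
    congr 1
    field_simp
  rw [h1, mul_pow, ← Real.exp_nat_mul]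
  push_cast
  ring_nf

/-- Grand Bang (`a₁ < 0`): `ρ a³ = 3a₁²α² a₀³ t^(-2(α+1)) e^(3a₁ t^(-α)) → 0`
as `t → 0⁺`; Grand Rip (`a₁ > 0`): `ρ a³ → +∞`. -/
theorem grand_densitized_energy (a₀ a₁ α : ℝ) (ha₀ : 0 < a₀) (hα : 0 < α) :
    (a₁ < 0 →
      Tendsto (fun t : ℝ =>
          3 * a₁ ^ 2 * α ^ 2 * t ^ (-(2 * (α + 1))) * (a₀ * Real.exp (a₁ * t ^ (-α))) ^ 3)
        (nhdsWithin 0 (Set.Ioi 0)) (nhds 0)) ∧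
    (0 < a₁ →
      Tendsto (fun t : ℝ =>
          3 * a₁ ^ 2 * α ^ 2 * t ^ (-(2 * (α + 1))) * (a₀ * Real.exp (a₁ * t ^ (-α))) ^ 3)
        (nhdsWithin 0 (Set.Ioi 0)) atTop) := by
  have heq := grand_aux a₀ a₁ α ha₀ hα
  have htop : Tendsto (fun t : ℝ => t ^ (-α)) (nhdsWithin 0 (Set.Ioi 0)) atTop := by
    have : ∀ᶠ t in nhdsWithin (0:ℝ) (Set.Ioi 0), t ^ (-α) = (t⁻¹) ^ α := by
      filter_upwards [self_mem_nhdsWithin] with t (ht : 0 < t)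
      rw [Real.rpow_neg ht.le, ← Real.inv_rpow ht.le]
    exact Tendsto.congr' (this.mono fun t h => h.symm) ((tendsto_rpow_atTop hα).comp tendsto_inv_nhdsGT_zero)
  constructor
  · intro ha₁
    have hC : Tendsto (fun u : ℝ => 3 * a₁ ^ 2 * α ^ 2 * a₀ ^ 3 * (u ^ (2 * (α + 1) / α) * Real.exp (3 * a₁ * u))) atTop (nhds 0) := by
      have := (tendsto_rpow_mul_exp_neg_mul_atTop_nhds_zero (2 * (α + 1) / α) (-(3 * a₁)) (by nlinarith)).const_mul (3 * a₁ ^ 2 * α ^ 2 * a₀ ^ 3)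
      simpa using this
    exact Tendsto.congr' (heq.mono fun t h => h.symm) (hC.comp htop)
  · intro ha₁
    have hC : Tendsto (fun u : ℝ => 3 * a₁ ^ 2 * α ^ 2 * a₀ ^ 3 * (u ^ (2 * (α + 1) / α) * Real.exp (3 * a₁ * u))) atTop atTop := by
      apply Tendsto.const_mul_atTop (by positivity)
      exact (tendsto_rpow_atTop (by positivity)).atTop_mul_atTop₀
        (Real.tendsto_exp_atTop.comp (tendsto_id.const_mul_atTop (by positivity)))
    exact Tendsto.congr' (heq.mono fun t h => h.symm) (hC.comp htop)
end

section
/- For a(t) = a₀ exp(a₁ t^(-α)) with a₀, α > 0 and a₁ ≠ 0, the ratio p(t)/ρ(t) → -1 as t → 0⁺, where ρ = 3ȧ²/a² and p = -2ä/a - ȧ²/a². -/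
open Real Filter Topology

lemma grand_aux_s12 (x P s c β : ℝ) (hx : x ≠ 0) (hP : P ≠ 0) (hc : c ≠ 0) :
    (-2 * (x * (c * P) * (c * P) + x * (c * (β * (s * (P * P))))) / x - (x * (c * P)) ^ 2 / x ^ 2) /
      (3 * (x * (c * P)) ^ 2 / x ^ 2) = -1 - (2 * β / (3 * c)) * s := by
  field_simp
  ring

/-- Grand Bang/Rip models: the barotropic ratio `p/ρ → -1` as `t → 0⁺`, where
`ρ = 3ȧ²/a²` and `p = -2ä/a - ȧ²/a²`, for `a(t) = a₀ e^(a₁ t^(-α))`. -/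
theorem grand_barotropic_limit (a₀ a₁ α : ℝ) (ha₀ : 0 < a₀) (hα : 0 < α) (ha₁ : a₁ ≠ 0)
    (a : ℝ → ℝ) (ha : ∀ t : ℝ, a t = a₀ * Real.exp (a₁ * t ^ (-α))) :
    Tendsto (fun t : ℝ =>
        (-2 * deriv (deriv a) t / a t - (deriv a t) ^ 2 / (a t) ^ 2) /
          (3 * (deriv a t) ^ 2 / (a t) ^ 2))
      (nhdsWithin 0 (Set.Ioi 0)) (nhds (-1)) := by
  have hfa : a = fun t => a₀ * Real.exp (a₁ * t ^ (-α)) := funext ha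
  set c : ℝ := a₁ * (-α) with hc
  set β : ℝ := -α - 1 with hβ
  have hcne : c ≠ 0 := mul_ne_zero ha₁ (neg_ne_zero.mpr hα.ne')
  -- first derivative
  have hd1 : ∀ t : ℝ, 0 < t → HasDerivAt a (a t * (c * t ^ β)) t := by
    intro t ht
    rw [hfa]
    have h1 : HasDerivAt (fun t : ℝ => t ^ (-α)) (-α * t ^ (-α - 1)) t :=
      Real.hasDerivAt_rpow_const (Or.inl ht.ne')
    have h2 := ((h1.const_mul a₁).exp.const_mul a₀)
    refine h2.congr_deriv ?_
    simp only [hc, hβ]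
    ring
  have haeq : ∀ t : ℝ, 0 < t → deriv a t = a t * (c * t ^ β) := fun t ht => (hd1 t ht).deriv
  -- second derivative on Ioi 0
  have hd2 : ∀ t : ℝ, 0 < t →
      deriv (deriv a) t = a t * (c * t ^ β) * (c * t ^ β) + a t * (c * (β * t ^ (β - 1))) := by
    intro t ht
    have hev : deriv a =ᶠ[nhds t] fun s => a s * (c * s ^ β) := by
      filter_upwards [IsOpen.mem_nhds isOpen_Ioi ht] with s hs
      exact haeq s hs
    rw [hev.deriv_eq]
    have h1 : HasDerivAt (fun s : ℝ => s ^ β) (β * t ^ (β - 1)) t :=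
      Real.hasDerivAt_rpow_const (Or.inl ht.ne')
    exact (((hd1 t ht).mul ((h1.const_mul c))).deriv)
  have hane : ∀ t : ℝ, a t ≠ 0 := by
    intro t; rw [ha t]; positivity
  -- the expression equals a simple function on Ioi 0
  have key : ∀ t : ℝ, 0 < t →
      (-2 * deriv (deriv a) t / a t - (deriv a t) ^ 2 / (a t) ^ 2) /
          (3 * (deriv a t) ^ 2 / (a t) ^ 2) = -1 - (2 * β / (3 * c)) * t ^ α := by
    intro t ht
    rw [hd2 t ht, haeq t ht]
    have hP : t ^ β ≠ 0 := (Real.rpow_pos_of_pos ht β).ne'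
    have hsplit : t ^ (β - 1) = t ^ α * (t ^ β * t ^ β) := by
      rw [← Real.rpow_add ht, ← Real.rpow_add ht]
      ring_nf
      rw [hβ]
      ring_nf
    rw [hsplit]
    exact grand_aux_s12 (a t) (t ^ β) (t ^ α) c β (hane t) hP hcne
  have hzero : Tendsto (fun t : ℝ => t ^ α) (nhdsWithin 0 (Set.Ioi 0)) (nhds 0) := by
    have := (Real.continuousAt_rpow_const 0 α (Or.inr hα.le)).continuousWithinAt
      (s := Set.Ioi 0)
    simpa [Real.zero_rpow hα.ne'] using this.tendsto
  have hlim : Tendsto (fun t : ℝ => -1 - (2 * β / (3 * c)) * t ^ α)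
      (nhdsWithin 0 (Set.Ioi 0)) (nhds (-1)) := by
    have : Tendsto (fun t : ℝ => -1 - (2 * β / (3 * c)) * t ^ α)
        (nhdsWithin 0 (Set.Ioi 0)) (nhds (-1 - (2 * β / (3 * c)) * 0)) :=
      tendsto_const_nhds.sub (tendsto_const_nhds.mul hzero)
    simpa using this
  exact Tendsto.congr' (Filter.eventuallyEq_of_mem self_mem_nhdsWithin
    fun t ht => (key t ht).symm) hlim
end

section
/- For w > 0 (and w ≠ -1), both ρ(t) = 4/(3(1+w)²t²) and its densitized version ρ(t)a(t)³ = (4a₀³/(3(1+w)²)) t^(-2w/(1+w)) tend to +∞ as t → 0⁺; hence the densitization fails to regularize the Big Bang for any classical equation of state with w ∈ (0,1]. -/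
open Real Filter Topology

/-- For `w > 0`, both `ρ(t) = 4/(3(1+w)²t²)` and the densitized
`ρ a³ = (4a₀³/(3(1+w)²)) t^(-2w/(1+w))` tend to `+∞` as `t → 0⁺`: densitization
fails to regularize the Big Bang for any classical equation of state. -/
theorem densitization_fails_classical (a₀ w : ℝ) (ha₀ : 0 < a₀) (hw : 0 < w)
    (hw' : w ≠ -1) :
    Tendsto (fun t : ℝ => 4 / (3 * (1 + w) ^ 2 * t ^ 2))
      (nhdsWithin 0 (Set.Ioi 0)) atTop ∧
    Tendsto (fun t : ℝ => (4 * a₀ ^ 3 / (3 * (1 + w) ^ 2)) * t ^ (-2 * w / (1 + w)))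
      (nhdsWithin 0 (Set.Ioi 0)) atTop := by
  have h1w : 0 < 1 + w := by linarith
  have hC : 0 < 3 * (1 + w) ^ 2 := by positivity
  constructor
  · have hsq : Tendsto (fun t : ℝ => t ^ 2) (nhdsWithin 0 (Set.Ioi 0))
        (nhdsWithin 0 (Set.Ioi 0)) := by
      apply tendsto_nhdsWithin_of_tendsto_nhds_of_eventually_within
      · have : Tendsto (fun t : ℝ => t ^ 2) (nhds (0:ℝ)) (nhds ((0:ℝ) ^ 2)) :=
          (continuous_pow 2).continuousAt
        simpa using this.mono_left nhdsWithin_le_nhds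
      · filter_upwards [self_mem_nhdsWithin] with t ht
        exact pow_pos (Set.mem_Ioi.mp ht) 2
    have hinv : Tendsto (fun t : ℝ => (t ^ 2)⁻¹) (nhdsWithin 0 (Set.Ioi 0)) atTop :=
      tendsto_inv_nhdsGT_zero.comp hsq
    refine (hinv.const_mul_atTop (show (0:ℝ) < 4 / (3 * (1 + w) ^ 2) by positivity)).congr
      fun t => ?_
    rw [← div_eq_mul_inv, div_div]
  · set p := -2 * w / (1 + w) with hp
    have hpneg : p < 0 := by
      apply div_neg_of_neg_of_pos _ h1w
      linarith
    have hbase : Tendsto (fun t : ℝ => t⁻¹) (nhdsWithin 0 (Set.Ioi 0)) atTop :=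
      tendsto_inv_nhdsGT_zero
    have hr : Tendsto (fun x : ℝ => x ^ (-p)) atTop atTop :=
      tendsto_rpow_atTop (by linarith)
    have hcomp := hr.comp hbase
    have heq : Tendsto (fun t : ℝ => t ^ p) (nhdsWithin 0 (Set.Ioi 0)) atTop := by
      refine hcomp.congr' ?_
      filter_upwards [self_mem_nhdsWithin] with t ht
      have ht' : 0 < t := ht
      simp [Function.comp, ← Real.rpow_neg_one, ← Real.rpow_natCast,
        ← Real.rpow_mul ht'.le]
    exact heq.const_mul_atTop (by positivity)
end
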